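/- Let n ≥ 7 be a natural number and let λ be a real number with 0 ≤ λ ≤ 1/(n−1). Then Y + (n/2)·Z − X·(n/2 − 1) − n²/4 + λ·(n/2)·(Y − (n/2)·X) > 0. (Equivalently, this quantity equals (n−2)·(2^n − 2n·(1+λ)·(n−1)) / (4·(2 + 2^n − 2n)), which is strictly positive for all n ≥ 7 and λ ≤ 1/(n−1).) -/

import Mathlib

open Finset

private lemma sum_id_mul_choose' (m : ℕ) :
    2 * ∑ j ∈ range (m + 1), j * m.choose j = m * 2 ^ m := by
  have h1 : ∑ j ∈ range (m + 1), (m - j) * m.choose (m - j)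
      = ∑ j ∈ range (m + 1), j * m.choose j := by
    have := Finset.sum_range_reflect (fun j => j * m.choose j) (m + 1)
    simpa using this
  have h2 : ∀ j ∈ range (m + 1), (m - j) * m.choose (m - j) = (m - j) * m.choose j := by
    intro j hj
    rw [mem_range] at hj
    rw [Nat.choose_symm (by omega)]
  rw [two_mul]
  nth_rewrite 1 [← h1]
  rw [Finset.sum_congr rfl h2, ← Finset.sum_add_distrib, ← Nat.sum_range_choose m,
    Finset.mul_sum]
  apply Finset.sum_congr rfl
  intro j hj
  rw [mem_range] at hj
  rw [← add_mul, Nat.sub_add_cancel (by omega)]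

private lemma pow_gt_sq' (m : ℕ) (hm : 5 ≤ m) : (m + 2) ^ 2 < 2 ^ (m + 1) := by
  induction m, hm using Nat.le_induction with
  | base => norm_num
  | succ k hk ih =>
    have h2 : 2 ^ (k + 1 + 1) = 2 * 2 ^ (k + 1) := by ring
    nlinarith [ih]

set_option maxHeartbeats 1000000 in
/-- For `n ≥ 7` and `0 ≤ λ ≤ 1/(n-1)`,
`Y + (n/2)·Z - X·(n/2 - 1) - n²/4 + λ·(n/2)·(Y - (n/2)·X) > 0`. -/
theorem stmt_9 (n : ℕ) (hn : 7 ≤ n) (lam : ℝ)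
    (hlam0 : 0 ≤ lam) (hlam1 : lam ≤ 1 / ((n : ℝ) - 1))
    (Δ X Y Z : ℝ)
    (hΔ : Δ = 2 ^ (n - 1) - ((n : ℝ) - 1))
    (hX : X = ((n : ℝ) - 1) * (∑ k ∈ Finset.Icc 1 (n - 2), ((n - 2).choose (k - 1) : ℝ)) / Δ)
    (hY : Y = ((n : ℝ) - 1) * (∑ k ∈ Finset.Icc 1 (n - 2), (k : ℝ) * ((n - 2).choose (k - 1) : ℝ)) / Δ)
    (hZ : Z = ((n : ℝ) - 1) *
      ((∑ k ∈ Finset.Icc 2 n, ((n - 2).choose (k - 2) : ℝ)) - ((n - 2).choose (n - 3) : ℝ)) / Δ) :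
    Y + ((n : ℝ) / 2) * Z - X * ((n : ℝ) / 2 - 1) - (n : ℝ) ^ 2 / 4 +
      lam * ((n : ℝ) / 2) * (Y - ((n : ℝ) / 2) * X) > 0 := by
  obtain ⟨m, rfl⟩ : ∃ m, n = m + 2 := ⟨n - 2, by omega⟩
  have hm : 5 ≤ m := by omega
  set M : ℝ := (m : ℝ) with hM
  have hM5 : (5 : ℝ) ≤ M := by rw [hM]; exact_mod_cast hm
  set p : ℝ := (2 : ℝ) ^ m with hp
  -- simplify nat subtractions
  have e1 : m + 2 - 1 = m + 1 := by omega
  have e2 : m + 2 - 2 = m := by omega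
  have e3 : m + 2 - 3 = m - 1 := by omega
  rw [e1] at hΔ
  rw [e2] at hX hY hZ
  rw [e3] at hZ
  -- the three sum identities (in ℕ, then cast)
  have hA : ∑ k ∈ Icc 1 m, m.choose (k - 1) + 1 = 2 ^ m := by
    rw [← Finset.Ico_add_one_right_eq_Icc, Finset.sum_Ico_eq_sum_range]
    simp only [Nat.add_sub_cancel_left, Nat.add_sub_cancel]
    rw [← Nat.sum_range_choose m, Finset.sum_range_succ,
      Nat.choose_self]
  have hB : 2 * (∑ k ∈ Icc 1 m, k * m.choose (k - 1)) + 2 * (m + 1)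
      = m * 2 ^ m + 2 ^ (m + 1) := by
    rw [← Finset.Ico_add_one_right_eq_Icc, Finset.sum_Ico_eq_sum_range, show m + 1 - 1 = m by omega]
    simp only [Nat.add_sub_cancel_left, Nat.add_sub_cancel]
    have f1 : ∑ i ∈ range (m + 1), (1 + i) * m.choose i
        = ∑ i ∈ range m, (1 + i) * m.choose i + (1 + m) := by
      rw [Finset.sum_range_succ, Nat.choose_self, mul_one]
    have f2 : ∑ i ∈ range (m + 1), (1 + i) * m.choose i
        = 2 ^ m + ∑ i ∈ range (m + 1), i * m.choose i := by
      simp only [add_mul, one_mul, Finset.sum_add_distrib, Nat.sum_range_choose]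
    have := sum_id_mul_choose' m
    omega
  have hC : ∑ k ∈ Icc 2 (m + 2), m.choose (k - 2) = 2 ^ m := by
    rw [← Finset.Ico_add_one_right_eq_Icc, Finset.sum_Ico_eq_sum_range]
    simp only [Nat.add_sub_cancel_left]
    rw [show m + 2 + 1 - 2 = m + 1 by omega, ← Nat.sum_range_choose m]
  have hD : m.choose (m - 1) = m := by
    rw [Nat.choose_symm (show 1 ≤ m by omega), Nat.choose_one_right]
  -- cast them to ℝ
  have hAR : (∑ k ∈ Icc 1 m, (m.choose (k - 1) : ℝ)) = p - 1 := by
    have := congrArg (fun t : ℕ => (t : ℝ)) hA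
    push_cast at this
    rw [hp]; push_cast; linarith
  have hBR : (∑ k ∈ Icc 1 m, (k : ℝ) * (m.choose (k - 1) : ℝ))
      = (M * p + 2 * p - 2 * (M + 1)) / 2 := by
    have := congrArg (fun t : ℕ => (t : ℝ)) hB
    push_cast at this
    rw [hp, hM]
    push_cast
    rw [pow_succ] at this
    linarith
  have hCR : (∑ k ∈ Icc 2 (m + 2), (m.choose (k - 2) : ℝ)) = p := by
    have := congrArg (fun t : ℕ => (t : ℝ)) hC
    push_cast at this
    rw [hp]; push_cast; linarith
  have hDR : (m.choose (m - 1) : ℝ) = M := by rw [hM]; exact_mod_cast hD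
  -- cast of n
  have hNR : ((m + 2 : ℕ) : ℝ) = M + 2 := by push_cast; ring
  have hΔ' : Δ = 2 * p - (M + 1) := by
    rw [hΔ, hNR, pow_succ, hp]; ring
  -- key size fact : (M+2)^2 < 2*p
  have hsq : (M + 2) ^ 2 < 2 * p := by
    have h := pow_gt_sq' m hm
    have : ((m + 2) ^ 2 : ℝ) < (2 ^ (m + 1) : ℕ) := by exact_mod_cast h
    push_cast at this
    rw [hp, hM]; push_cast
    calc ((m : ℝ) + 2) ^ 2 < 2 ^ (m + 1) := this
      _ = 2 * 2 ^ m := by ring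
  have hΔpos : 0 < Δ := by rw [hΔ']; nlinarith
  have hppos : (0:ℝ) < p := by positivity
  -- lam bound
  have hlam' : lam * (M + 1) ≤ 1 := by
    rw [hNR] at hlam1
    have h1 : (0:ℝ) < M + 1 := by linarith
    calc lam * (M + 1) ≤ (1 / (M + 2 - 1)) * (M + 1) := by
          apply mul_le_mul_of_nonneg_right hlam1 (by linarith)
      _ = 1 := by rw [show M + 2 - 1 = M + 1 by ring]; field_simp
  -- rewrite the goal
  rw [hX, hY, hZ, hAR, hBR, hCR, hDR, hNR]
  have key : (M + 2 - 1) * ((M * p + 2 * p - 2 * (M + 1)) / 2) / Δ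
      + ((M + 2) / 2) * ((M + 2 - 1) * (p - M) / Δ)
      - ((M + 2 - 1) * (p - 1) / Δ) * ((M + 2) / 2 - 1) - (M + 2) ^ 2 / 4
      + lam * ((M + 2) / 2) * ((M + 2 - 1) * ((M * p + 2 * p - 2 * (M + 1)) / 2) / Δ
          - ((M + 2) / 2) * ((M + 2 - 1) * (p - 1) / Δ))
      = (M * (2 * p - (M + 2) * (M + 1) * (1 + lam))) / (4 * Δ) := by
    rw [hΔ']
    have hΔne : (2 * p - (M + 1)) ≠ 0 := by rw [← hΔ']; linarith
    field_simp
    ring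
  rw [key]
  apply div_pos _ (by linarith)
  have hM0 : (0:ℝ) < M := by linarith
  nlinarith [mul_nonneg (mul_nonneg (le_of_lt hM0) (by linarith : (0:ℝ) ≤ M + 2)) 
      (by linarith : (0:ℝ) ≤ 1 - lam * (M + 1)),
    mul_nonneg hlam0 (sq_nonneg (M+1))]
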